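/- Let s, t be coprime positive integers. The image of the set {(p,q) ∈ ℂ² : p ≠ 0, q ≠ 0, q^s·(s+t)^{s+t} = (−1)^{s+t}·p^{s+t}·s^s·t^t} under the map (p,q) ↦ (log|p|, log|q|) equals the line {(x,y) ∈ ℝ² : x = (s/(s+t))·y + log((t/s)^{s/(s+t)} + (s/t)^{t/(s+t)})}. (That is, the amoeba of the discriminant of trinomials with exponents s, t is this line.) -/

import Mathlib

lemma amoeba_key (S T : ℝ) (hS : 0 < S) (hT : 0 < T) :
    Real.log ((T/S) ^ (S/(S+T)) + (S/T) ^ (T/(S+T))) =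
      Real.log (S+T) - (S*Real.log S + T*Real.log T)/(S+T) := by
  have hN : 0 < S + T := by linarith
  set A := -(S*Real.log S + T*Real.log T)/(S+T) with hA
  have h1 : (T/S) ^ (S/(S+T)) = T * Real.exp A := by
    rw [Real.rpow_def_of_pos (div_pos hT hS), Real.log_div hT.ne' hS.ne',
      show T * Real.exp A = Real.exp (Real.log T + A) by
        rw [Real.exp_add, Real.exp_log hT]]
    congr 1
    rw [hA]; field_simp; ring
  have h2 : (S/T) ^ (T/(S+T)) = S * Real.exp A := by
    rw [Real.rpow_def_of_pos (div_pos hS hT), Real.log_div hS.ne' hT.ne',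
      show S * Real.exp A = Real.exp (Real.log S + A) by
        rw [Real.exp_add, Real.exp_log hS]]
    congr 1
    rw [hA]; field_simp; ring
  rw [h1, h2, show T * Real.exp A + S * Real.exp A = (S+T) * Real.exp A by ring,
    Real.log_mul hN.ne' (Real.exp_pos A).ne', Real.log_exp, hA]
  ring

theorem discriminant_amoeba_is_line (s t : ℕ) (hs : 0 < s) (ht : 0 < t)
    (hst : Nat.Coprime s t) :
    (fun x : ℂ × ℂ =>
        (Real.log ‖x.1‖, Real.log ‖x.2‖)) ''
      {x : ℂ × ℂ | x.1 ≠ 0 ∧ x.2 ≠ 0 ∧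
        x.2 ^ s * ((s : ℂ) + t) ^ (s + t) =
          (-1 : ℂ) ^ (s + t) * x.1 ^ (s + t) * (s : ℂ) ^ s * (t : ℂ) ^ t} =
    {y : ℝ × ℝ | y.1 = ((s : ℝ) / (s + t)) * y.2 +
      Real.log (((t : ℝ) / s) ^ ((s : ℝ) / (s + t)) +
        ((s : ℝ) / t) ^ ((t : ℝ) / (s + t)))} := by
  have hS : (0:ℝ) < s := by exact_mod_cast hs
  have hT : (0:ℝ) < t := by exact_mod_cast ht
  have hN : (0:ℝ) < (s:ℝ) + t := by linarith
  have hkey := amoeba_key (s:ℝ) (t:ℝ) hS hT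
  ext ⟨X, Y⟩
  simp only [Set.mem_image, Set.mem_setOf_eq, Prod.mk.injEq]
  constructor
  · rintro ⟨⟨p, q⟩, ⟨hp, hq, hE⟩, hX, hY⟩
    have habs := congrArg (‖·‖) hE
    simp only [norm_mul, norm_pow, norm_neg, norm_one, Complex.norm_natCast,
      one_pow, one_mul] at habs
    have hcast : ‖((s:ℂ) + t)‖ = (s:ℝ) + t := by
      rw [show ((s:ℂ) + t) = ((s+t : ℕ) : ℂ) by push_cast; ring,
        Complex.norm_natCast]
      push_cast; ring
    rw [hcast] at habs
    have hpp : 0 < ‖p‖ := by simpa using hp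
    have hqq : 0 < ‖q‖ := by simpa using hq
    have hlog := congrArg Real.log habs
    rw [Real.log_mul (by positivity) (by positivity),
      Real.log_mul (by positivity) (by positivity),
      Real.log_mul (by positivity) (by positivity)] at hlog
    simp only [Real.log_pow] at hlog
    push_cast at hlog
    rw [hkey, ← hX, ← hY]
    field_simp
    linarith
  · rintro hline
    try simp only [Set.mem_setOf_eq] at hline
    rw [hkey] at hline
    set p : ℂ := ((Real.exp X : ℝ) : ℂ)
    have hp : p ≠ 0 := by
      simp only [p, ne_eq, Complex.ofReal_eq_zero]
      exact (Real.exp_pos X).ne'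
    have hNc : ((s:ℂ) + t) ≠ 0 := by
      rw [show ((s:ℂ) + t) = ((s+t : ℕ) : ℂ) by push_cast; ring]
      exact_mod_cast (by omega : s + t ≠ 0)
    set c : ℂ := (-1 : ℂ) ^ (s + t) * p ^ (s + t) * (s : ℂ) ^ s * (t : ℂ) ^ t /
      ((s:ℂ) + t) ^ (s + t) with hc
    have hc0 : c ≠ 0 := by
      apply div_ne_zero
      · apply mul_ne_zero
        apply mul_ne_zero
        apply mul_ne_zero
        · exact pow_ne_zero _ (by norm_num)
        · exact pow_ne_zero _ hp
        · exact pow_ne_zero _ (by exact_mod_cast hS.ne')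
        · exact pow_ne_zero _ (by exact_mod_cast hT.ne')
      · exact pow_ne_zero _ hNc
    obtain ⟨q, hq⟩ := Complex.isAlgClosed.exists_pow_nat_eq c hs
    have hq0 : q ≠ 0 := by
      intro h
      rw [h, zero_pow hs.ne'] at hq
      exact hc0 hq.symm
    have hpp : 0 < ‖p‖ := by simpa using hp
    have hlogp : Real.log (‖p‖) = X := by
      simp only [p, Complex.norm_real, Real.norm_eq_abs, abs_of_pos (Real.exp_pos X), Real.log_exp]
    refine ⟨(p, q), ⟨hp, hq0, ?_⟩, hlogp, ?_⟩
    · show q ^ s * ((s:ℂ) + t) ^ (s + t) = _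
      rw [hq, hc]
      field_simp
    · show Real.log (‖q‖) = Y
      have habs := congrArg (‖·‖) hq
      rw [hc] at habs
      simp only [norm_pow, norm_div, norm_mul, norm_neg, norm_one, one_pow,
        one_mul, Complex.norm_natCast] at habs
      have hcast : ‖((s:ℂ) + t)‖ = (s:ℝ) + t := by
        rw [show ((s:ℂ) + t) = ((s+t : ℕ) : ℂ) by push_cast; ring,
          Complex.norm_natCast]
        push_cast; ring
      rw [hcast] at habs
      have hqq : 0 < ‖q‖ := by simpa using hq0
      have hlog := congrArg Real.log habs
      rw [Real.log_div
          (mul_ne_zero (mul_ne_zero (pow_ne_zero _ hpp.ne') (pow_ne_zero _ hS.ne'))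
            (pow_ne_zero _ hT.ne')) (pow_ne_zero _ hN.ne'),
        Real.log_mul (mul_ne_zero (pow_ne_zero _ hpp.ne') (pow_ne_zero _ hS.ne'))
          (pow_ne_zero _ hT.ne'),
        Real.log_mul (pow_ne_zero _ hpp.ne') (pow_ne_zero _ hS.ne')] at hlog
      simp only [Real.log_pow] at hlog
      rw [hlogp] at hlog
      push_cast at hlog
      have hXY : ((s:ℝ) + t) * X = s * Y + ((s:ℝ)+t) * Real.log ((s:ℝ)+t)
          - s * Real.log s - t * Real.log t := by
        rw [hline]; field_simp; ring
      have : (s:ℝ) * Real.log (‖q‖) = s * Y := by linarith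
      have := mul_left_cancel₀ hS.ne' this
      linarith
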